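/- Let d > 0 and let h:[0,1]→[0,∞) be Lipschitz with h(0)=h(1)=0 and ∫₀¹ h dL¹ = d. Then ∫₀¹ √(1+|h'|²) dL¹ ≥ 1/2 + d. -/

import Mathlib

open MeasureTheory Set
open scoped NNReal
open Filter
open scoped Topology

/-- For a Lipschitz profile h : [0,1] → [0,∞) (extended by 0 outside [0,1]) with
    h(0) = h(1) = 0 and ∫₀¹ h = d > 0 one has ∫₀¹ √(1+|h'|²) ≥ 1/2 + d. -/

lemma lip_deriv_bound (h : ℝ → ℝ) (K : ℝ≥0) (hlip : LipschitzWith K h) (x : ℝ) :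
    |deriv h x| ≤ K := by
  by_cases hx : DifferentiableAt ℝ h x
  · simpa [Real.norm_eq_abs] using hx.hasDerivAt.le_of_lipschitz hlip
  · simp [deriv_zero_of_not_differentiableAt hx, K.coe_nonneg]

lemma small_avg (h : ℝ → ℝ) (K : ℝ≥0) (hlip : LipschitzWith K h) (y : ℝ) :
    Tendsto (fun n : ℕ => ((n : ℝ) + 1) * ∫ x in y..(y + ((n:ℝ)+1)⁻¹), h x)
      atTop (𝓝 (h y)) := by
  have hcont := hlip.continuous
  have key : ∀ n : ℕ, |((n : ℝ) + 1) * (∫ x in y..(y + ((n:ℝ)+1)⁻¹), h x) - h y|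
      ≤ K * ((n:ℝ)+1)⁻¹ := by
    intro n
    set c : ℝ := ((n:ℝ)+1)⁻¹ with hc
    have hcpos : (0:ℝ) < c := by positivity
    have hne : ((n:ℝ)+1) ≠ 0 := by positivity
    have hconst : ((n : ℝ) + 1) * (∫ _x in y..(y + c), h y) = h y := by
      rw [intervalIntegral.integral_const, smul_eq_mul]
      have : y + c - y = c := by ring
      rw [this, hc]
      field_simp
    have hsub : ((n : ℝ) + 1) * (∫ x in y..(y + c), h x) - h y
        = ((n : ℝ) + 1) * (∫ x in y..(y + c), (h x - h y)) := by
      rw [intervalIntegral.integral_sub (hcont.intervalIntegrable _ _)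
        (intervalIntegrable_const), mul_sub, hconst]
    rw [hsub, abs_mul]
    have hbound : ‖∫ x in y..(y + c), (h x - h y)‖ ≤ (K * c) * |y + c - y| := by
      apply intervalIntegral.norm_integral_le_of_norm_le_const
      intro x hx
      rw [uIoc_of_le (by linarith)] at hx
      have h1 : |h x - h y| ≤ K * |x - y| := by
        simpa [Real.dist_eq] using hlip.dist_le_mul x y
      rw [Real.norm_eq_abs]
      refine h1.trans ?_
      have h2 : |x - y| ≤ c := by
        rw [abs_le]; constructor
        · linarith [hx.1.le]
        · linarith [hx.2]
      nlinarith [K.coe_nonneg]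
    rw [Real.norm_eq_abs] at hbound
    have h3 : |y + c - y| = c := by
      have : y + c - y = c := by ring
      rw [this, abs_of_pos hcpos]
    rw [h3] at hbound
    have h4 : |((n:ℝ)+1)| * |∫ x in y..(y + c), (h x - h y)| ≤ ((n:ℝ)+1) * (K * c * c) := by
      rw [abs_of_pos (by positivity : (0:ℝ) < (n:ℝ)+1)]
      exact mul_le_mul_of_nonneg_left hbound (by positivity)
    refine h4.trans (le_of_eq ?_)
    rw [hc]; field_simp
  have hK : Tendsto (fun n : ℕ => (K:ℝ) * ((n:ℝ)+1)⁻¹) atTop (𝓝 0) := by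
    have h0 := tendsto_one_div_add_atTop_nhds_zero_nat (𝕜 := ℝ)
    have := h0.const_mul (K:ℝ)
    simpa [one_div, mul_comm] using this
  have h5 : Tendsto (fun n : ℕ =>
      (((n : ℝ) + 1) * ∫ x in y..(y + ((n:ℝ)+1)⁻¹), h x) - h y) atTop (𝓝 0) :=
    squeeze_zero_norm (fun n => by rw [Real.norm_eq_abs]; exact key n) hK
  have := h5.add_const (h y)
  simpa using this

lemma lip_ftc (h : ℝ → ℝ) (K : ℝ≥0) (hlip : LipschitzWith K h) (a b : ℝ) :
    ∫ x in a..b, deriv h x = h b - h a := by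
  have hcont := hlip.continuous
  set c : ℕ → ℝ := fun n => ((n:ℝ)+1)⁻¹ with hc
  set F : ℕ → ℝ → ℝ := fun n x => ((n:ℝ)+1) * (h (x + c n) - h x) with hF
  have hFcont : ∀ n, Continuous (F n) := by
    intro n
    apply Continuous.mul continuous_const
    exact (hcont.comp (continuous_id.add continuous_const)).sub hcont
  have hinteg : ∀ n, ∫ x in a..b, F n x
      = ((n:ℝ)+1) * (∫ x in b..(b + c n), h x) - ((n:ℝ)+1) * (∫ x in a..(a + c n), h x) := by
    intro n
    have hint : ∀ u v : ℝ, IntervalIntegrable h volume u v := fun u v =>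
      hcont.intervalIntegrable u v
    have hint2 : IntervalIntegrable (fun x => h (x + c n)) volume a b :=
      ((hcont.comp (continuous_id.add continuous_const)).intervalIntegrable a b)
    have e1 : ∫ x in a..b, F n x
        = ((n:ℝ)+1) * ((∫ x in a..b, h (x + c n)) - ∫ x in a..b, h x) := by
      rw [show (∫ x in a..b, F n x) = ∫ x in a..b, ((n:ℝ)+1) * (h (x + c n) - h x) from rfl,
        intervalIntegral.integral_const_mul,
        intervalIntegral.integral_sub hint2 (hint a b)]
    have e2 : (∫ x in a..b, h (x + c n)) = ∫ x in (a + c n)..(b + c n), h x :=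
      intervalIntegral.integral_comp_add_right h (c n)
    have e3 : (∫ x in (a + c n)..(b + c n), h x) - (∫ x in a..b, h x)
        = (∫ x in b..(b + c n), h x) - (∫ x in a..(a + c n), h x) := by
      have A : (∫ x in a..(a + c n), h x) + (∫ x in (a + c n)..(b + c n), h x)
          = ∫ x in a..(b + c n), h x :=
        intervalIntegral.integral_add_adjacent_intervals (hint _ _) (hint _ _)
      have B : (∫ x in a..b, h x) + (∫ x in b..(b + c n), h x)
          = ∫ x in a..(b + c n), h x :=
        intervalIntegral.integral_add_adjacent_intervals (hint _ _) (hint _ _)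
      linarith
    rw [e1, e2, e3]; ring
  have hlim1 : Tendsto (fun n => ∫ x in a..b, F n x) atTop (𝓝 (h b - h a)) := by
    have := (small_avg h K hlip b).sub (small_avg h K hlip a)
    simp only [hinteg]
    exact this
  have hlim2 : Tendsto (fun n => ∫ x in a..b, F n x) atTop (𝓝 (∫ x in a..b, deriv h x)) := by
    apply intervalIntegral.tendsto_integral_filter_of_dominated_convergence
      (fun _ => (K : ℝ))
    · filter_upwards with n
      exact (hFcont n).aestronglyMeasurable
    · filter_upwards with n
      filter_upwards with x _
      have hcpos : (0:ℝ) < c n := by rw [hc]; positivity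
      have hb1 : |h (x + c n) - h x| ≤ K * c n := by
        have h1 : |h (x + c n) - h x| ≤ K * |x + c n - x| := by
          simpa [Real.dist_eq] using hlip.dist_le_mul (x + c n) x
        rwa [show x + c n - x = c n from by ring, abs_of_pos hcpos] at h1
      rw [Real.norm_eq_abs, show F n x = ((n:ℝ)+1) * (h (x + c n) - h x) from rfl,
        abs_mul, abs_of_pos (by positivity : (0:ℝ) < (n:ℝ)+1)]
      calc ((n:ℝ)+1) * |h (x + c n) - h x| ≤ ((n:ℝ)+1) * (K * c n) :=
            mul_le_mul_of_nonneg_left hb1 (by positivity)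
        _ = (K : ℝ) := by rw [hc]; field_simp
    · exact intervalIntegrable_const
    · filter_upwards [hlip.ae_differentiableAt] with x hx _
      have hd : HasDerivAt h (deriv h x) x := hx.hasDerivAt
      have hslope := hasDerivAt_iff_tendsto_slope.mp hd
      have hu : Tendsto (fun n : ℕ => x + c n) atTop (𝓝[≠] x) := by
        apply tendsto_nhdsWithin_of_tendsto_nhds_of_eventually_within
        · have h0 : Tendsto c atTop (𝓝 0) := by
            have := tendsto_one_div_add_atTop_nhds_zero_nat (𝕜 := ℝ)
            simpa [hc, one_div] using this
          simpa using tendsto_const_nhds.add h0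
        · filter_upwards with n
          have hcpos : (0:ℝ) < c n := by rw [hc]; positivity
          simp only [mem_compl_iff, mem_singleton_iff]
          intro hcontra
          nlinarith
      have := hslope.comp hu
      convert this using 2 with n
      have hcpos : (0:ℝ) < c n := by rw [hc]; positivity
      have hcn : c n = ((n:ℝ)+1)⁻¹ := rfl
      show ((n:ℝ)+1) * (h (x + c n) - h x) = (slope h x ∘ fun n => x + c n) n
      simp only [Function.comp_apply, slope_def_field]
      rw [show x + c n - x = c n from by ring, hcn]
      field_simp
  exact tendsto_nhds_unique hlim2 hlim1

lemma sqrt_lower_aux (t : ℝ) : Real.sqrt 3 / 2 + |t| / 2 ≤ Real.sqrt (1 + t ^ 2) := by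
  apply Real.le_sqrt_of_sq_le
  have h3 : Real.sqrt 3 ^ 2 = 3 := Real.sq_sqrt (by norm_num)
  nlinarith [sq_nonneg (Real.sqrt 3 * |t| - 1), sq_abs t, abs_nonneg t, Real.sqrt_nonneg 3]

theorem surface_energy_lower_bound (d : ℝ) (hd : 0 < d) (h : ℝ → ℝ) (K : ℝ≥0)
    (hlip : LipschitzWith K h) (hnn : ∀ x, 0 ≤ h x)
    (hout : ∀ x, x ∉ Icc (0:ℝ) 1 → h x = 0)
    (h0 : h 0 = 0) (h1 : h 1 = 0)
    (hvol : (∫ x in Ioo (0:ℝ) 1, h x) = d) :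
    (1/2 : ℝ) + d ≤ ∫ x in Ioo (0:ℝ) 1, Real.sqrt (1 + (deriv h x)^2) := by
  have hcont := hlip.continuous
  have hdb := lip_deriv_bound h K hlip
  -- integrability of |deriv h| on subintervals
  have hintabs : ∀ u v : ℝ, IntegrableOn (fun x => |deriv h x|) (Ioc u v) volume := by
    intro u v
    refine Integrable.mono' (g := fun _ => (K:ℝ)) (integrableOn_const
      (measure_Ioc_lt_top.ne)) ((measurable_deriv h).abs.aestronglyMeasurable) ?_
    filter_upwards with x
    rw [Real.norm_eq_abs, abs_abs]
    exact hdb x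
  set C : ℝ := ∫ x in Ioc (0:ℝ) 1, |deriv h x| with hC
  -- Step A : 2 h y ≤ C for y ∈ [0,1]
  have stepA : ∀ y : ℝ, 0 ≤ y → y ≤ 1 → 2 * h y ≤ C := by
    intro y hy0 hy1
    have i1 : h y - h 0 = ∫ x in (0:ℝ)..y, deriv h x := (lip_ftc h K hlip 0 y).symm
    have i2 : h 1 - h y = ∫ x in y..(1:ℝ), deriv h x := (lip_ftc h K hlip y 1).symm
    have b1 : (∫ x in (0:ℝ)..y, deriv h x) ≤ ∫ x in Ioc (0:ℝ) y, |deriv h x| := by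
      rw [intervalIntegral.integral_of_le hy0]
      calc (∫ x in Ioc (0:ℝ) y, deriv h x)
          ≤ ‖∫ x in Ioc (0:ℝ) y, deriv h x‖ := le_abs_self _
        _ ≤ ∫ x in Ioc (0:ℝ) y, ‖deriv h x‖ := norm_integral_le_integral_norm _
        _ = ∫ x in Ioc (0:ℝ) y, |deriv h x| := by simp [Real.norm_eq_abs]
    have b2 : -(∫ x in y..(1:ℝ), deriv h x) ≤ ∫ x in Ioc y 1, |deriv h x| := by
      rw [intervalIntegral.integral_of_le hy1]
      calc -(∫ x in Ioc y 1, deriv h x)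
          ≤ ‖∫ x in Ioc y 1, deriv h x‖ := neg_le_abs _
        _ ≤ ∫ x in Ioc y 1, ‖deriv h x‖ := norm_integral_le_integral_norm _
        _ = ∫ x in Ioc y 1, |deriv h x| := by simp [Real.norm_eq_abs]
    have hsplit : (∫ x in Ioc (0:ℝ) y, |deriv h x|) + (∫ x in Ioc y 1, |deriv h x|) = C := by
      rw [hC, ← Ioc_union_Ioc_eq_Ioc hy0 hy1,
        setIntegral_union (Ioc_disjoint_Ioc_of_le le_rfl) measurableSet_Ioc (hintabs 0 y) (hintabs y 1)]
    have : 2 * h y = (h y - h 0) - (h 1 - h y) := by rw [h0, h1]; ring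
    rw [this, i1, i2]
    linarith
  -- Step B : 2 d ≤ C
  have hIoo : volume (Ioo (0:ℝ) 1) = 1 := by simp
  have hintIoo : IntegrableOn h (Ioo (0:ℝ) 1) volume :=
    (hcont.continuousOn.integrableOn_Icc).mono_set Ioo_subset_Icc_self
  have stepB : 2 * d ≤ C := by
    have hmono : (∫ x in Ioo (0:ℝ) 1, h x) ≤ ∫ x in Ioo (0:ℝ) 1, C / 2 := by
      refine setIntegral_mono_on hintIoo (integrableOn_const (by simp))
        measurableSet_Ioo ?_
      intro x hx
      have := stepA x hx.1.le hx.2.le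
      linarith
    rw [hvol, setIntegral_const, measureReal_def, hIoo] at hmono
    simp at hmono
    linarith
  -- integrability of the surface integrand
  have hintsqrt : IntegrableOn (fun x => Real.sqrt (1 + (deriv h x)^2)) (Ioo (0:ℝ) 1) volume := by
    refine Integrable.mono' (g := fun _ => (1 + (K:ℝ))) (integrableOn_const
      ((by simp)))
      (((measurable_const.add ((measurable_deriv h).pow_const 2)).sqrt).aestronglyMeasurable) ?_
    filter_upwards with x
    rw [Real.norm_eq_abs, abs_of_nonneg (Real.sqrt_nonneg _)]
    have h1k : Real.sqrt (1 + (deriv h x)^2) ≤ Real.sqrt ((1 + (K:ℝ))^2) := by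
      apply Real.sqrt_le_sqrt
      nlinarith [hdb x, abs_nonneg (deriv h x), sq_abs (deriv h x), K.coe_nonneg]
    rwa [Real.sqrt_sq (by positivity)] at h1k
  have hintabs' : IntegrableOn (fun x => |deriv h x|) (Ioo (0:ℝ) 1) volume :=
    (hintabs 0 1).mono_set Ioo_subset_Ioc_self
  -- Step C : main comparison
  have hCioo : (∫ x in Ioo (0:ℝ) 1, |deriv h x|) = C := integral_Ioc_eq_integral_Ioo.symm
  have stepC : Real.sqrt 3 / 2 + C / 2 ≤ ∫ x in Ioo (0:ℝ) 1, Real.sqrt (1 + (deriv h x)^2) := by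
    have hmono : (∫ x in Ioo (0:ℝ) 1, (Real.sqrt 3 / 2 + |deriv h x| / 2))
        ≤ ∫ x in Ioo (0:ℝ) 1, Real.sqrt (1 + (deriv h x)^2) := by
      refine setIntegral_mono_on ?_ hintsqrt measurableSet_Ioo ?_
      · exact (integrableOn_const (by simp)).add (hintabs'.div_const 2)
      · intro x _
        exact sqrt_lower_aux (deriv h x)
    have hsum : (∫ x in Ioo (0:ℝ) 1, (Real.sqrt 3 / 2 + |deriv h x| / 2))
        = Real.sqrt 3 / 2 + C / 2 := by
      rw [integral_add (integrableOn_const (μ := volume) (s := Ioo (0:ℝ) 1) (C := Real.sqrt 3 / 2) (by simp)) (hintabs'.div_const 2),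
        setIntegral_const, measureReal_def, hIoo, integral_div, hCioo]
      simp
    linarith
  have hsqrt3 : (1:ℝ) ≤ Real.sqrt 3 := by
    have := Real.sqrt_le_sqrt (show (1:ℝ) ≤ 3 by norm_num)
    rwa [Real.sqrt_one] at this
  linarith
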